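/- Let ℋ be finite-dimensional. The map c : L_QM → CL_QM defined by c(S) = ⋃_{𝒜 ∈ 𝔄} {(𝒜, P) ∈ S!_QM : P ≤ S(𝒜)} is an injective complete lattice homomorphism from L_QM into the powerset lattice CL_QM = 𝒫(S!_QM): it is injective, preserves arbitrary suprema and arbitrary infima (in particular ⊤ and ⊥). -/

import Mathlib

open scoped ENNReal

variable (H : Type*) [NormedAddCommGroup H] [InnerProductSpace ℂ H] [CompleteSpace H]

/-- An orthogonal projection on the Hilbert space `H`, i.e. an element of `L(ℋ)`. -/
def IsProj (P : H →L[ℂ] H) : Prop := IsIdempotentElem P ∧ IsSelfAdjoint P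

/-- The lattice order on projections: `P ≤ Q` iff `P * Q = P`. -/
def pleq (P Q : H →L[ℂ] H) : Prop := P * Q = P

/-- An abelian (commutative) von Neumann algebra. -/
def IsAbelianAlg (A : VonNeumannAlgebra H) : Prop :=
  ∀ x ∈ A, ∀ y ∈ A, x * y = y * x
/-- The collection `𝔄` of abelian von Neumann subalgebras of `B(H)`. -/
def AbAlg := {A : VonNeumannAlgebra H // IsAbelianAlg H A}
/-- The lattice `L_QM`: monotone functions `S : 𝔄 → L(ℋ)` with `S(𝒜) ∈ L(𝒜)`. -/
structure LQM where
  S : AbAlg H → (H →L[ℂ] H)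
  isProj : ∀ A : AbAlg H, IsProj H (S A)
  mem : ∀ A : AbAlg H, S A ∈ A.1
  mono : ∀ A B : AbAlg H, A.1 ≤ B.1 → pleq H (S A) (S B)

/-- `L_QM` carries the pointwise partial order. -/
instance : PartialOrder (LQM H) where
  le S₁ S₂ := ∀ A : AbAlg H, pleq H (S₁.S A) (S₂.S A)
  le_refl S A := (S.isProj A).1
  le_trans S₁ S₂ S₃ h12 h23 A := by
    show S₁.S A * S₃.S A = S₁.S A
    calc S₁.S A * S₃.S A = S₁.S A * S₂.S A * S₃.S A := by rw [h12 A]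
      _ = S₁.S A * (S₂.S A * S₃.S A) := mul_assoc _ _ _
      _ = S₁.S A := by rw [h23 A, h12 A]
  le_antisymm S₁ S₂ h12 h21 := by
    have hS : S₁.S = S₂.S := funext fun A => by
      have hc : S₁.S A * S₂.S A = S₂.S A * S₁.S A :=
        A.2 _ (S₁.mem A) _ (S₂.mem A)
      calc S₁.S A = S₁.S A * S₂.S A := (h12 A).symm
        _ = S₂.S A * S₁.S A := hc
        _ = S₂.S A := h21 A
    cases S₁; cases S₂; cases hS; rfl

theorem LQM.le_def (S₁ S₂ : LQM H) :
    S₁ ≤ S₂ ↔ ∀ A : AbAlg H, pleq H (S₁.S A) (S₂.S A) := Iff.rfl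
/-- `P` is an atom of the Boolean lattice `L(𝒜)`, i.e. `P ∈ L₀(𝒜)`. -/
def IsAtomIn (A : VonNeumannAlgebra H) (P : H →L[ℂ] H) : Prop :=
  P ∈ A ∧ IsProj H P ∧ P ≠ 0 ∧
    ∀ Q : H →L[ℂ] H, Q ∈ A → IsProj H Q → pleq H Q P → Q = 0 ∨ Q = P

/-- The set `S!_QM` of pairs `(𝒜, P)` with `𝒜 ∈ 𝔄` and `P ∈ L₀(𝒜)` an atom of `L(𝒜)`. -/
def SBang := {x : AbAlg H × (H →L[ℂ] H) // IsAtomIn H x.1.1 x.2}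
/-- The map `c : L_QM → CL_QM = 𝒫(S!_QM)`,
`c(S) = ⋃_𝒜 {(𝒜,P) ∈ S!_QM : P ≤ S(𝒜)}`. -/
def cMap (S : LQM H) : Set (SBang H) := {x | pleq H x.1.2 (S.S x.1.1)}


section Helpers

variable {H}

theorem pleq_trans' {P Q R : H →L[ℂ] H} (h1 : pleq H P Q) (h2 : pleq H Q R) : pleq H P R := by
  unfold pleq at *
  calc P * R = P * Q * R := by rw [h1]
    _ = P * (Q * R) := mul_assoc _ _ _
    _ = P := by rw [h2, h1]

theorem pleq_rev {P Q : H →L[ℂ] H} (hP : IsSelfAdjoint P) (hQ : IsSelfAdjoint Q)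
    (h : pleq H P Q) : Q * P = P := by
  have h2 := congrArg star h
  rwa [star_mul, hP.star_eq, hQ.star_eq] at h2

theorem range_le_of_pleq {P Q : H →L[ℂ] H} (hP : IsSelfAdjoint P) (hQ : IsSelfAdjoint Q)
    (h : pleq H P Q) : LinearMap.range (P : H →ₗ[ℂ] H) ≤ LinearMap.range (Q : H →ₗ[ℂ] H) := by
  have h' := pleq_rev hP hQ h
  rintro x ⟨y, rfl⟩
  refine ⟨P y, ?_⟩
  have := congrFun (congrArg DFunLike.coe h') y
  simpa [ContinuousLinearMap.mul_apply] using this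

theorem pleq_of_range_le {P Q : H →L[ℂ] H} (hP : IsSelfAdjoint P)
    (hQi : IsIdempotentElem Q) (hQ : IsSelfAdjoint Q)
    (h : LinearMap.range (P : H →ₗ[ℂ] H) ≤ LinearMap.range (Q : H →ₗ[ℂ] H)) : pleq H P Q := by
  have hQP : Q * P = P := by
    ext y
    obtain ⟨z, hz⟩ := h ⟨y, rfl⟩
    simp only [ContinuousLinearMap.coe_coe] at hz
    have hz2 : Q (Q z) = Q z := by
      have := congrFun (congrArg DFunLike.coe hQi) z
      simpa [ContinuousLinearMap.mul_apply] using this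
    simp only [ContinuousLinearMap.mul_apply]
    rw [← hz, hz2]
  have := congrArg star hQP
  rwa [star_mul, hP.star_eq, hQ.star_eq] at this

theorem proj_eq_of_pleq {P Q : H →L[ℂ] H} (hP : IsSelfAdjoint P) (hQ : IsSelfAdjoint Q)
    (h1 : pleq H P Q) (h2 : pleq H Q P) : P = Q := by
  have h3 := pleq_rev hP hQ h1
  rw [← h3, h2]

theorem isProj_mul {P Q : H →L[ℂ] H} (hP : IsProj H P) (hQ : IsProj H Q)
    (hc : P * Q = Q * P) : IsProj H (P * Q) := by
  constructor
  · show P * Q * (P * Q) = P * Q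
    calc P * Q * (P * Q) = P * (Q * (P * Q)) := by simp only [mul_assoc]
      _ = P * ((Q * P) * Q) := by rw [mul_assoc]
      _ = P * ((P * Q) * Q) := by rw [hc]
      _ = P * (P * (Q * Q)) := by rw [mul_assoc]
      _ = P * (P * Q) := by rw [hQ.1]
      _ = (P * P) * Q := by rw [← mul_assoc]
      _ = P * Q := by rw [hP.1]
  · show star (P * Q) = P * Q
    rw [star_mul, hP.2.star_eq, hQ.2.star_eq, ← hc]

end Helpers

section ProjCLM

variable {H}

/-- The orthogonal projection onto `V` as an endomorphism of `H`. -/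
noncomputable def projCLM (V : Submodule ℂ H) [CompleteSpace V] : H →L[ℂ] H :=
  V.subtypeL ∘L V.orthogonalProjectionOnto

theorem projCLM_apply_mem (V : Submodule ℂ H) [CompleteSpace V] (x : H) : projCLM V x ∈ V :=
  (V.orthogonalProjectionOnto x).2

theorem projCLM_apply_eq (V : Submodule ℂ H) [CompleteSpace V] {x : H} (hx : x ∈ V) :
    projCLM V x = x := by
  exact Submodule.starProjection_eq_self_iff.mpr hx

theorem projCLM_isSelfAdjoint (V : Submodule ℂ H) [CompleteSpace V] :
    IsSelfAdjoint (projCLM V) :=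
  isSelfAdjoint_starProjection V

theorem projCLM_isIdempotent (V : Submodule ℂ H) [CompleteSpace V] :
    IsIdempotentElem (projCLM V) := by
  apply ContinuousLinearMap.ext
  intro x
  simp only [ContinuousLinearMap.mul_apply]
  exact projCLM_apply_eq V (projCLM_apply_mem V x)

theorem projCLM_isProj (V : Submodule ℂ H) [CompleteSpace V] : IsProj H (projCLM V) :=
  ⟨projCLM_isIdempotent V, projCLM_isSelfAdjoint V⟩

theorem projCLM_range (V : Submodule ℂ H) [CompleteSpace V] :
    LinearMap.range ((projCLM V) : H →ₗ[ℂ] H) = V := by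
  apply le_antisymm
  · rintro x ⟨y, rfl⟩
    exact projCLM_apply_mem V y
  · intro v hv
    exact ⟨v, projCLM_apply_eq V hv⟩

theorem projCLM_mem (A : VonNeumannAlgebra H) (V : Submodule ℂ H) [CompleteSpace V]
    (hinv : ∀ x ∈ Set.centralizer (A : Set (H →L[ℂ] H)), ∀ v ∈ V, x v ∈ V) :
    projCLM V ∈ A := by
  set P := projCLM V with hPdef
  have key : ∀ x : H →L[ℂ] H, (∀ v ∈ V, x v ∈ V) → P * (x * P) = x * P := by
    intro x hx
    apply ContinuousLinearMap.ext
    intro u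
    simp only [ContinuousLinearMap.mul_apply]
    exact projCLM_apply_eq V (hx _ (projCLM_apply_mem V u))
  have hstar : ∀ x ∈ Set.centralizer (A : Set (H →L[ℂ] H)),
      star x ∈ Set.centralizer (A : Set (H →L[ℂ] H)) := by
    intro x hx m hm
    have h1 : star m ∈ (A : Set (H →L[ℂ] H)) := star_mem hm
    have h2 := hx (star m) h1
    have h3 := congrArg star h2
    rw [star_mul, star_mul, star_star] at h3
    exact h3.symm
  have hmem : P ∈ Set.centralizer (Set.centralizer (A : Set (H →L[ℂ] H))) := by
    intro x hx
    -- goal : x * P = P * x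
    have e1 := key x (hinv x hx)
    have e2 := key (star x) (hinv _ (hstar x hx))
    have e3 := congrArg star e2
    rw [star_mul, star_mul, star_star, (projCLM_isSelfAdjoint V).star_eq, ← hPdef] at e3
    -- e3 : (P * x) * P = P * x   (check)
    calc x * P = P * (x * P) := e1.symm
      _ = (P * x) * P := by rw [← mul_assoc]
      _ = P * x := e3
  rw [A.centralizer_centralizer] at hmem
  exact hmem

theorem range_invariant {e x : H →L[ℂ] H} (hcomm : e * x = x * e) :
    ∀ v ∈ LinearMap.range (e : H →ₗ[ℂ] H), x v ∈ LinearMap.range (e : H →ₗ[ℂ] H) := by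
  rintro v ⟨u, rfl⟩
  refine ⟨x u, ?_⟩
  have := congrFun (congrArg DFunLike.coe hcomm) u
  simpa [ContinuousLinearMap.mul_apply] using this

theorem sSup_invariant {𝒱 : Set (Submodule ℂ H)} {x : H →L[ℂ] H}
    (h : ∀ W ∈ 𝒱, ∀ v ∈ W, x v ∈ W) : ∀ v ∈ sSup 𝒱, x v ∈ sSup 𝒱 := by
  have hle : sSup 𝒱 ≤ Submodule.comap (x : H →ₗ[ℂ] H) (sSup 𝒱) := by
    apply sSup_le
    intro W hW v hv
    have : x v ∈ sSup 𝒱 := le_sSup hW (h W hW v hv)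
    simpa [Submodule.mem_comap] using this
  intro v hv
  simpa [Submodule.mem_comap] using hle hv

theorem sInf_invariant {𝒱 : Set (Submodule ℂ H)} {x : H →L[ℂ] H}
    (h : ∀ W ∈ 𝒱, ∀ v ∈ W, x v ∈ W) : ∀ v ∈ sInf 𝒱, x v ∈ sInf 𝒱 := by
  intro v hv
  rw [Submodule.mem_sInf] at hv ⊢
  exact fun W hW => h W hW v (hv W hW)

end ProjCLM

section SupInf

variable {H}
variable [FiniteDimensional ℂ H]

/-- The set of ranges `{ran S(𝒜) : S ∈ T}`. -/
def rangesAt (T : Set (LQM H)) (A : AbAlg H) : Set (Submodule ℂ H) :=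
  (fun S : LQM H => LinearMap.range ((S.S A) : H →ₗ[ℂ] H)) '' T

/-- The pointwise supremum of a family in `L_QM`. -/
noncomputable def supLQM (T : Set (LQM H)) : LQM H where
  S A := projCLM (sSup (rangesAt T A))
  isProj A := projCLM_isProj _
  mem A := by
    apply projCLM_mem
    intro x hx
    apply sSup_invariant
    rintro W ⟨S, hS, rfl⟩
    exact range_invariant (hx (S.S A) (S.mem A))
  mono A B hAB := by
    apply pleq_of_range_le (projCLM_isSelfAdjoint _) (projCLM_isIdempotent _)
      (projCLM_isSelfAdjoint _)
    rw [projCLM_range, projCLM_range]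
    apply sSup_le
    rintro W ⟨S, hS, rfl⟩
    exact le_trans
      (range_le_of_pleq (S.isProj A).2 (S.isProj B).2 (S.mono A B hAB))
      (le_sSup ⟨S, hS, rfl⟩)

/-- The pointwise infimum of a family in `L_QM`. -/
noncomputable def infLQM (T : Set (LQM H)) : LQM H where
  S A := projCLM (sInf (rangesAt T A))
  isProj A := projCLM_isProj _
  mem A := by
    apply projCLM_mem
    intro x hx
    apply sInf_invariant
    rintro W ⟨S, hS, rfl⟩
    exact range_invariant (hx (S.S A) (S.mem A))
  mono A B hAB := by
    apply pleq_of_range_le (projCLM_isSelfAdjoint _) (projCLM_isIdempotent _)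
      (projCLM_isSelfAdjoint _)
    rw [projCLM_range, projCLM_range]
    apply le_sInf
    rintro W ⟨S, hS, rfl⟩
    exact le_trans (sInf_le ⟨S, hS, rfl⟩)
      (range_le_of_pleq (S.isProj A).2 (S.isProj B).2 (S.mono A B hAB))

theorem isLUB_supLQM (T : Set (LQM H)) : IsLUB T (supLQM T) := by
  constructor
  · intro S hS A
    apply pleq_of_range_le (S.isProj A).2 (projCLM_isIdempotent _) (projCLM_isSelfAdjoint _)
    rw [projCLM_range]
    exact le_sSup ⟨S, hS, rfl⟩
  · intro U hU A
    apply pleq_of_range_le (projCLM_isSelfAdjoint _) (U.isProj A).1 (U.isProj A).2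
    rw [projCLM_range]
    apply sSup_le
    rintro W ⟨S, hS, rfl⟩
    exact range_le_of_pleq (S.isProj A).2 (U.isProj A).2 (hU hS A)

theorem isGLB_infLQM (T : Set (LQM H)) : IsGLB T (infLQM T) := by
  constructor
  · intro S hS A
    apply pleq_of_range_le (projCLM_isSelfAdjoint _) (S.isProj A).1 (S.isProj A).2
    rw [projCLM_range]
    exact sInf_le ⟨S, hS, rfl⟩
  · intro L hL A
    apply pleq_of_range_le (L.isProj A).2 (projCLM_isIdempotent _) (projCLM_isSelfAdjoint _)
    rw [projCLM_range]
    apply le_sInf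
    rintro W ⟨S, hS, rfl⟩
    exact range_le_of_pleq (L.isProj A).2 (S.isProj A).2 (hL hS A)

end SupInf

section Atoms

variable {H}

theorem atom_mul_eq_zero {A : AbAlg H} {P e : H →L[ℂ] H} (hatom : IsAtomIn H A.1 P)
    (he : e ∈ A.1) (hep : IsProj H e) (h0 : ¬ pleq H P e) : P * e = 0 := by
  have hPA := hatom.1
  have hcomm : P * e = e * P := A.2 _ hPA _ he
  have hproj : IsProj H (P * e) := isProj_mul hatom.2.1 hep hcomm
  have hple : pleq H (P * e) P := by
    show P * e * P = P * e
    calc P * e * P = P * (e * P) := mul_assoc _ _ _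
      _ = P * (P * e) := by rw [← hcomm]
      _ = P * P * e := (mul_assoc _ _ _).symm
      _ = P * e := by rw [hatom.2.1.1]
  rcases hatom.2.2.2 (P * e) (mul_mem hPA he) hproj hple with h | h
  · exact h
  · exact absurd h h0

theorem exists_atom_le [FiniteDimensional ℂ H] (A : AbAlg H) :
    ∀ n : ℕ, ∀ E : H →L[ℂ] H, E ∈ A.1 → IsProj H E → E ≠ 0 →
      Module.finrank ℂ (LinearMap.range (E : H →ₗ[ℂ] H)) ≤ n →
      ∃ Q, IsAtomIn H A.1 Q ∧ pleq H Q E := by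
  intro n
  induction n with
  | zero =>
    intro E hmem hproj h0 hrank
    exfalso
    apply h0
    have hbot : LinearMap.range (E : H →ₗ[ℂ] H) = ⊥ :=
      Submodule.finrank_eq_zero.mp (Nat.le_zero.mp hrank)
    apply ContinuousLinearMap.ext
    intro u
    have : E u ∈ LinearMap.range (E : H →ₗ[ℂ] H) := ⟨u, rfl⟩
    rw [hbot] at this
    simpa using this
  | succ n ih =>
    intro E hmem hproj h0 hrank
    by_cases hat : IsAtomIn H A.1 E
    · exact ⟨E, hat, hproj.1⟩
    · have hex : ∃ Q : H →L[ℂ] H, Q ∈ A.1 ∧ IsProj H Q ∧ pleq H Q E ∧ Q ≠ 0 ∧ Q ≠ E := by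
        by_contra hno
        push_neg at hno
        apply hat
        refine ⟨hmem, hproj, h0, ?_⟩
        intro Q hQ hQp hQle
        by_cases hQ0 : Q = 0
        · exact Or.inl hQ0
        · exact Or.inr (hno Q hQ hQp hQle hQ0)
      obtain ⟨Q, hQmem, hQproj, hQle, hQ0, hQE⟩ := hex
      have hrle : LinearMap.range (Q : H →ₗ[ℂ] H) ≤ LinearMap.range (E : H →ₗ[ℂ] H) :=
        range_le_of_pleq hQproj.2 hproj.2 hQle
      have hrne : LinearMap.range (Q : H →ₗ[ℂ] H) ≠ LinearMap.range (E : H →ₗ[ℂ] H) := by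
        intro hreq
        apply hQE
        apply proj_eq_of_pleq hQproj.2 hproj.2 hQle
        exact pleq_of_range_le hproj.2 hQproj.1 hQproj.2 hreq.ge
      have hlt : LinearMap.range (Q : H →ₗ[ℂ] H) < LinearMap.range (E : H →ₗ[ℂ] H) := lt_of_le_of_ne hrle hrne
      have hfr : Module.finrank ℂ (LinearMap.range (Q : H →ₗ[ℂ] H)) < Module.finrank ℂ (LinearMap.range (E : H →ₗ[ℂ] H)) :=
        Submodule.finrank_lt_finrank_of_lt hlt
      obtain ⟨R, hR, hRle⟩ := ih Q hQmem hQproj hQ0 (by omega)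
      exact ⟨R, hR, pleq_trans' hRle hQle⟩

end Atoms

section Main

variable {H}
variable [FiniteDimensional ℂ H]

theorem cMap_supLQM (T : Set (LQM H)) : cMap H (supLQM T) = ⋃₀ (cMap H '' T) := by
  ext x
  constructor
  · intro hx
    by_contra hns
    have hnot : ∀ S ∈ T, ¬ pleq H x.1.2 (S.S x.1.1) := by
      intro S hS hple
      exact hns ⟨cMap H S, ⟨S, hS, rfl⟩, hple⟩
    have hatom : IsAtomIn H x.1.1.1 x.1.2 := x.2
    have hz : ∀ S ∈ T, x.1.2 * S.S x.1.1 = 0 := fun S hS =>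
      atom_mul_eq_zero hatom (S.mem x.1.1) (S.isProj x.1.1) (hnot S hS)
    have hker : sSup (rangesAt T x.1.1) ≤ LinearMap.ker (x.1.2 : H →ₗ[ℂ] H) := by
      apply sSup_le
      rintro W ⟨S, hS, rfl⟩
      rintro v ⟨u, rfl⟩
      have := congrFun (congrArg DFunLike.coe (hz S hS)) u
      simpa [ContinuousLinearMap.mul_apply] using this
    have hran : LinearMap.range (x.1.2 : H →ₗ[ℂ] H) ≤ sSup (rangesAt T x.1.1) := by
      have hx' : pleq H x.1.2 ((supLQM T).S x.1.1) := hx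
      have := range_le_of_pleq hatom.2.1.2 (projCLM_isSelfAdjoint _) hx'
      rwa [projCLM_range] at this
    apply hatom.2.2.1
    apply ContinuousLinearMap.ext; intro u
    have h1 : x.1.2 u ∈ LinearMap.ker (x.1.2 : H →ₗ[ℂ] H) := hker (hran ⟨u, rfl⟩)
    rw [LinearMap.mem_ker, ContinuousLinearMap.coe_coe] at h1
    have h2 : x.1.2 (x.1.2 u) = x.1.2 u := by
      have := congrFun (congrArg DFunLike.coe hatom.2.1.1) u
      simpa [ContinuousLinearMap.mul_apply] using this
    show x.1.2 u = 0
    rw [← h2, h1]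
  · rintro ⟨t, ⟨S, hS, rfl⟩, hxt⟩
    exact pleq_trans' hxt ((isLUB_supLQM T).1 hS x.1.1)

theorem cMap_infLQM (T : Set (LQM H)) : cMap H (infLQM T) = ⋂₀ (cMap H '' T) := by
  ext x
  rw [Set.mem_sInter]
  constructor
  · rintro hx t ⟨S, hS, rfl⟩
    exact pleq_trans' hx ((isGLB_infLQM T).1 hS x.1.1)
  · intro hx
    show pleq H x.1.2 (projCLM _)
    apply pleq_of_range_le x.2.2.1.2 (projCLM_isIdempotent _) (projCLM_isSelfAdjoint _)
    rw [projCLM_range]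
    apply le_sInf
    rintro W ⟨S, hS, rfl⟩
    exact range_le_of_pleq x.2.2.1.2 (S.isProj x.1.1).2 (hx _ ⟨S, hS, rfl⟩)

theorem cMap_le_of_subset {Sa Sb : LQM H} (hsub : cMap H Sa ⊆ cMap H Sb) : Sa ≤ Sb := by
  intro A
  have hEm := Sa.mem A; have hFm := Sb.mem A
  have hEp := Sa.isProj A; have hFp := Sb.isProj A
  set E := Sa.S A with hE
  set F := Sb.S A with hF
  have hcomm : E * F = F * E := A.2 _ hEm _ hFm
  have h1 : E * (E * F) = E * F := by rw [← mul_assoc, hEp.1]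
  have h2 : (E * F) * E = E * F := by
    calc (E * F) * E = E * (F * E) := mul_assoc _ _ _
      _ = E * (E * F) := by rw [← hcomm]
      _ = E * F := h1
  show E * F = E
  by_contra hne
  have hG0 : E - E * F ≠ 0 := fun hG => hne (sub_eq_zero.mp hG).symm
  have hGmem : E - E * F ∈ A.1 := sub_mem hEm (mul_mem hEm hFm)
  have h3 : (E * F) * (E * F) = E * F := by
    calc (E * F) * (E * F) = ((E * F) * E) * F := (mul_assoc _ _ _).symm
      _ = (E * F) * F := by rw [h2]
      _ = E * (F * F) := mul_assoc _ _ _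
      _ = E * F := by rw [hFp.1]
  have hGidem : IsIdempotentElem (E - E * F) := by
    show (E - E * F) * (E - E * F) = E - E * F
    rw [sub_mul, mul_sub, mul_sub, hEp.1, h1, h2, h3, sub_self, sub_zero]
  have hGstar : IsSelfAdjoint (E - E * F) := by
    show star (E - E * F) = E - E * F
    rw [star_sub, star_mul, hEp.2.star_eq, hFp.2.star_eq, ← hcomm]
  obtain ⟨Q, hQatom, hQle⟩ := exists_atom_le A
    (Module.finrank ℂ (LinearMap.range ((E - E * F) : H →ₗ[ℂ] H))) (E - E * F)
    hGmem ⟨hGidem, hGstar⟩ hG0 le_rfl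
  have hQG : Q * (E - E * F) = Q := hQle
  have hGE : (E - E * F) * E = E - E * F := by
    rw [sub_mul, hEp.1, h2]
  have hQE : pleq H Q E := by
    show Q * E = Q
    calc Q * E = (Q * (E - E * F)) * E := by rw [hQG]
      _ = Q * ((E - E * F) * E) := mul_assoc _ _ _
      _ = Q * (E - E * F) := by rw [hGE]
      _ = Q := hQG
  have hQF : pleq H Q F := hsub (show (⟨(A, Q), hQatom⟩ : SBang H) ∈ cMap H Sa from hQE)
  have hQ0 : Q = 0 := by
    calc Q = Q * (E - E * F) := hQG.symm
      _ = Q * E - (Q * E) * F := by rw [mul_sub, ← mul_assoc]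
      _ = Q - Q := by rw [hQE, hQF]
      _ = 0 := sub_self Q
  exact hQatom.2.2.1 hQ0

end Main

/-- (`ℋ` finite-dimensional.) The map `c : L_QM → CL_QM = 𝒫(S!_QM)` is
an injective complete lattice homomorphism: it is injective, and it sends arbitrary
suprema to unions and arbitrary infima to intersections (in particular `⊤` to `univ` and
`⊥` to `∅`, via the empty family). -/
theorem cMap_injective_complete_hom [FiniteDimensional ℂ H] :
    Function.Injective (cMap H) ∧
    (∀ (T : Set (LQM H)) (j : LQM H), IsLUB T j → cMap H j = ⋃₀ (cMap H '' T)) ∧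
    (∀ (T : Set (LQM H)) (m : LQM H), IsGLB T m → cMap H m = ⋂₀ (cMap H '' T)) := by
  refine ⟨?_, ?_, ?_⟩
  · intro S₁ S₂ h
    exact le_antisymm (cMap_le_of_subset h.le) (cMap_le_of_subset h.ge)
  · intro T j hj
    rw [hj.unique (isLUB_supLQM T)]
    exact cMap_supLQM T
  · intro T m hm
    rw [hm.unique (isGLB_infLQM T)]
    exact cMap_infLQM T
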